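/- arXiv:1903.11536 — 2 statements merged into one kernel-verified Lean document; each statement's English description precedes it below -/
import Mathlib

section
/- Suppose the well-posedness inequality ‖u‖_{WP} ≤ C_{WP}·sup_{λ∈Λ}|λ(u)| holds for all u ∈ H, where ‖·‖_{WP} is a (semi)norm on H. Let Λ_N ⊆ Λ be finite, σ_{Λ_N} = sup_{λ∈Λ} dist(λ, span Λ_N)_{H*}, and let ũ_N be the orthogonal projection of u onto the span of the Riesz representers of Λ_N. Then ‖u − ũ_N‖_{WP} ≤ C_{WP}·σ_{Λ_N}·‖u‖_H. -/
open NormedSpace Metric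

/-- Lemma "sigma": the well-posedness error bound
`‖u − ũ_N‖_{WP} ≤ C_{WP} σ_{Λ_N} ‖u‖`. -/
theorem wellposed_error_bound
    {H : Type*} [NormedAddCommGroup H] [InnerProductSpace ℝ H] [CompleteSpace H]
    (Λ : Set (StrongDual ℝ H)) (p : Seminorm ℝ H) (C : ℝ) (hC : 0 < C)
    (hWP : ∀ u : H, p u ≤ C * ⨆ l : Λ, |(l : StrongDual ℝ H) u|)
    {N : ℕ} (lam : Fin N → StrongDual ℝ H) (hsub : Set.range lam ⊆ Λ)
    (v : Fin N → H) (hv : ∀ j, v j = (InnerProductSpace.toDual ℝ H).symm (lam j))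
    (u uN : H)
    (hmem : uN ∈ Submodule.span ℝ (Set.range v))
    (horth : ∀ w ∈ Submodule.span ℝ (Set.range v), inner ℝ (u - uN) w = (0 : ℝ)) :
    p (u - uN) ≤
      C * (⨆ l : Λ, infDist (l : StrongDual ℝ H)
            ((Submodule.span ℝ (Set.range lam) : Submodule ℝ (StrongDual ℝ H)) : Set (StrongDual ℝ H)))
        * ‖u‖ := by
  set w : H := u - uN with hw
  set T : Set (StrongDual ℝ H) :=
    ((Submodule.span ℝ (Set.range lam) : Submodule ℝ (StrongDual ℝ H)) : Set (StrongDual ℝ H)) with hT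
  -- every functional in the span annihilates w
  have hann : ∀ μ ∈ Submodule.span ℝ (Set.range lam), μ w = 0 := by
    intro μ hμ
    induction hμ using Submodule.span_induction with
    | mem x hx =>
        obtain ⟨j, rfl⟩ := hx
        have hx' : (lam j) w = inner ℝ (v j) w := by
          rw [hv j, InnerProductSpace.toDual_symm_apply]
        rw [hx', real_inner_comm]
        exact horth (v j) (Submodule.subset_span ⟨j, rfl⟩)
    | zero => simp
    | add x y hx hy ihx ihy => simp [ihx, ihy]
    | smul a x hx ih => simp [ih]
  -- pointwise bound |l w| ≤ infDist l T * ‖w‖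
  have hpt : ∀ l : StrongDual ℝ H, |l w| ≤ infDist l T * ‖w‖ := by
    intro l
    rcases eq_or_ne w 0 with h0 | h0
    · simp [h0]
    have hwpos : (0:ℝ) < ‖w‖ := norm_pos_iff.mpr h0
    rw [← div_le_iff₀ hwpos]
    have hTne : T.Nonempty := ⟨0, Submodule.zero_mem _⟩
    by_contra hlt
    push_neg at hlt
    rw [infDist_lt_iff hTne] at hlt
    obtain ⟨μ, hμ, hd⟩ := hlt
    apply not_le.mpr hd
    rw [div_le_iff₀ hwpos, dist_eq_norm]
    have hlw : l w = (l - μ) w := by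
      simp [hann μ hμ]
    calc |l w| = ‖(l - μ) w‖ := by rw [hlw]; rfl
      _ ≤ ‖l - μ‖ * ‖w‖ := (l - μ).le_opNorm w
  -- ‖w‖ ≤ ‖u‖
  have hwu : ‖w‖ ≤ ‖u‖ := by
    have h1 : inner ℝ w uN = (0:ℝ) := horth uN hmem
    have hiu : (inner ℝ w u : ℝ) = ‖w‖ * ‖w‖ := by
      have hu : u = w + uN := by rw [hw]; abel
      rw [hu, inner_add_right, h1, add_zero, real_inner_self_eq_norm_mul_norm]
    have h2 := real_inner_le_norm w u
    rcases eq_or_lt_of_le (norm_nonneg w) with h0 | h0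
    · rw [← h0]; exact norm_nonneg u
    · rw [hiu] at h2
      exact le_of_mul_le_mul_left h2 h0
  by_cases hbdd : BddAbove (Set.range fun l : Λ => infDist (l : StrongDual ℝ H) T)
  · have hS0 : 0 ≤ ⨆ l : Λ, infDist (l : StrongDual ℝ H) T :=
      Real.iSup_nonneg fun l => infDist_nonneg
    have hsup : (⨆ l : Λ, |(l : StrongDual ℝ H) w|) ≤ (⨆ l : Λ, infDist (l : StrongDual ℝ H) T) * ‖u‖ := by
      apply Real.iSup_le _ (mul_nonneg hS0 (norm_nonneg u))
      intro l
      calc |(l : StrongDual ℝ H) w| ≤ infDist (l : StrongDual ℝ H) T * ‖w‖ := hpt l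
        _ ≤ (⨆ l : Λ, infDist (l : StrongDual ℝ H) T) * ‖u‖ :=
          mul_le_mul (le_ciSup hbdd l) hwu (norm_nonneg w) hS0
    calc p w ≤ C * ⨆ l : Λ, |(l : StrongDual ℝ H) w| := hWP w
      _ ≤ C * ((⨆ l : Λ, infDist (l : StrongDual ℝ H) T) * ‖u‖) :=
          mul_le_mul_of_nonneg_left hsup hC.le
      _ = C * (⨆ l : Λ, infDist (l : StrongDual ℝ H) T) * ‖u‖ := by ring
  · rw [Real.iSup_of_not_bddAbove hbdd, mul_zero, zero_mul]
    by_cases hf : BddAbove (Set.range fun l : Λ => |(l : StrongDual ℝ H) w|)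
    · obtain ⟨M, hM⟩ := hf
      have hM' : ∀ l : Λ, |(l : StrongDual ℝ H) w| ≤ M := fun l => hM ⟨l, rfl⟩
      -- norms of elements of Λ are unbounded
      have hnorm : ¬ ∃ C', ∀ l : Λ, ‖(l : StrongDual ℝ H)‖ ≤ C' := by
        rintro ⟨C', hC'⟩
        apply hbdd
        refine ⟨C', ?_⟩
        rintro x ⟨l, rfl⟩
        calc infDist (l : StrongDual ℝ H) T ≤ dist (l : StrongDual ℝ H) 0 :=
              infDist_le_dist_of_mem (Submodule.zero_mem _)
          _ = ‖(l : StrongDual ℝ H)‖ := by rw [dist_zero_right]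
          _ ≤ C' := hC' l
      -- Banach–Steinhaus: find a point where the family is pointwise unbounded
      have hx : ¬ ∀ x : H, ∃ Cx, ∀ l : Λ, ‖(l : StrongDual ℝ H) x‖ ≤ Cx := by
        intro hcontra
        exact hnorm (banach_steinhaus hcontra)
      push_neg at hx
      obtain ⟨x₀, hx₀⟩ := hx
      have key : ∀ t : ℝ, 0 < t → p (w + t • x₀) ≤ 0 := by
        intro t ht
        have hub : ¬ BddAbove (Set.range fun l : Λ => |(l : StrongDual ℝ H) (w + t • x₀)|) := by
          rintro ⟨B, hB⟩
          obtain ⟨l, hl⟩ := hx₀ ((B + M) / t)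
          apply not_le.mpr hl
          have hB' : |(l : StrongDual ℝ H) (w + t • x₀)| ≤ B := hB ⟨l, rfl⟩
          have h1 : (l : StrongDual ℝ H) (w + t • x₀)
              = (l : StrongDual ℝ H) w + t * (l : StrongDual ℝ H) x₀ := by
            simp
          have h3 : |t * (l : StrongDual ℝ H) x₀|
              ≤ |(l : StrongDual ℝ H) w + t * (l : StrongDual ℝ H) x₀| + |(l : StrongDual ℝ H) w| := by
            calc |t * (l : StrongDual ℝ H) x₀|
                = |((l : StrongDual ℝ H) w + t * (l : StrongDual ℝ H) x₀) + (-(l : StrongDual ℝ H) w)| := by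
                  ring_nf
              _ ≤ |(l : StrongDual ℝ H) w + t * (l : StrongDual ℝ H) x₀| + |(-(l : StrongDual ℝ H) w)| :=
                  abs_add_le _ _
              _ = |(l : StrongDual ℝ H) w + t * (l : StrongDual ℝ H) x₀| + |(l : StrongDual ℝ H) w| := by
                  rw [abs_neg]
          rw [← h1] at h3
          have h4 : t * |(l : StrongDual ℝ H) x₀| ≤ B + M := by
            rw [← abs_of_pos ht, ← abs_mul]
            exact h3.trans (add_le_add hB' (hM' l))
          rw [show ‖(l : StrongDual ℝ H) x₀‖ = |(l : StrongDual ℝ H) x₀| from rfl]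
          rw [le_div_iff₀ ht]
          linarith [h4]
        have := hWP (w + t • x₀)
        rwa [Real.iSup_of_not_bddAbove hub, mul_zero] at this
      -- conclude p w ≤ 0 by letting t → 0
      by_contra hcon
      push_neg at hcon
      set t : ℝ := p w / (2 * (p x₀ + 1)) with htdef
      have hpx0 : (0:ℝ) ≤ p x₀ := apply_nonneg p x₀
      have ht : 0 < t := div_pos hcon (by linarith)
      have h2 : p w ≤ p (w + t • x₀) + p (t • x₀) := by
        simpa using map_sub_le_add p (w + t • x₀) (t • x₀)
      have h3 : p (t • x₀) = t * p x₀ := by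
        rw [map_smul_eq_mul, Real.norm_eq_abs, abs_of_pos ht]
      have h4 : p w ≤ t * p x₀ := by
        have := key t ht
        linarith [h2, h3, this]
      have h5 : t * p x₀ < p w := by
        have : t * p x₀ ≤ t * (p x₀ + 1) := by nlinarith
        have heq : t * (p x₀ + 1) = p w / 2 := by
          rw [htdef]; field_simp
        linarith
      linarith
    · have := hWP w
      rwa [Real.iSup_of_not_bddAbove hf, mul_zero] at this
end

section
/- (Lemma rho–sigma) Assume ‖u‖_{WP} = sup_{μ∈M}|μ(u)| for a compact set M ⊆ H*, and the well-posedness inequality ‖u‖_{WP} ≤ C_{WP}·sup_{λ∈Λ}|λ(u)| for all u ∈ H. Then for any finite Λ_N ⊆ Λ, ρ_{M,Λ_N} := max_{μ∈M} dist(μ, span Λ_N)_{H*} ≤ C_{WP}·σ_{Λ_N}, where σ_{Λ_N} = sup_{λ∈Λ} dist(λ, span Λ_N)_{H*}. -/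
open NormedSpace Metric
open scoped RealInnerProductSpace

set_option maxHeartbeats 1000000 in
/-- Lemma rho–sigma: `ρ_{M,Λ_N} ≤ C_{WP} σ_{Λ_N}`. -/
theorem rho_le_CWP_sigma
    {H : Type*} [NormedAddCommGroup H] [InnerProductSpace ℝ H] [CompleteSpace H]
    (Λ M : Set (StrongDual ℝ H)) (hMcpt : IsCompact M)
    (pWP : H → ℝ) (C : ℝ) (hC : 0 < C)
    (hWPeq : ∀ u : H, pWP u = ⨆ μ : M, |(μ : StrongDual ℝ H) u|)
    (hWP : ∀ u : H, pWP u ≤ C * ⨆ l : Λ, |(l : StrongDual ℝ H) u|)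
    {N : ℕ} (lam : Fin N → StrongDual ℝ H) (hsub : Set.range lam ⊆ Λ) :
    (⨆ μ : M, infDist (μ : StrongDual ℝ H)
        ((Submodule.span ℝ (Set.range lam) : Submodule ℝ (StrongDual ℝ H)) : Set (StrongDual ℝ H))) ≤
      C * ⨆ l : Λ, infDist (l : StrongDual ℝ H)
        ((Submodule.span ℝ (Set.range lam) : Submodule ℝ (StrongDual ℝ H)) : Set (StrongDual ℝ H)) := by
  classical
  set e := InnerProductSpace.toDual ℝ H with he
  set x : Fin N → H := fun i => e.symm (lam i) with hx
  set K : Submodule ℝ H := Submodule.span ℝ (Set.range x) with hKdef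
  haveI : FiniteDimensional ℝ K := FiniteDimensional.span_of_finite ℝ (Set.finite_range x)
  haveI : CompleteSpace K := FiniteDimensional.complete ℝ K
  set S : Set (StrongDual ℝ H) :=
    ((Submodule.span ℝ (Set.range lam) : Submodule ℝ (StrongDual ℝ H)) : Set (StrongDual ℝ H)) with hS
  -- membership transfers
  have hmem₁ : ∀ g ∈ Submodule.span ℝ (Set.range lam), e.symm g ∈ K := by
    intro g hg
    induction hg using Submodule.span_induction with
    | mem g hgm =>
        obtain ⟨i, rfl⟩ := hgm
        exact Submodule.subset_span ⟨i, rfl⟩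
    | zero => simpa using K.zero_mem
    | add a b _ _ ha hb => rw [map_add]; exact K.add_mem ha hb
    | smul c a _ ha =>
        have : e.symm (c • a) = c • e.symm a := by
          rw [LinearIsometryEquiv.map_smulₛₗ]
          simp [starRingEnd_apply]
        rw [this]; exact K.smul_mem c ha
  have hmem₂ : ∀ v ∈ K, e v ∈ Submodule.span ℝ (Set.range lam) := by
    intro v hv
    induction hv using Submodule.span_induction with
    | mem v hvm =>
        obtain ⟨i, rfl⟩ := hvm
        have : e (e.symm (lam i)) = lam i := e.apply_symm_apply _
        rw [show x i = e.symm (lam i) from rfl, this]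
        exact Submodule.subset_span ⟨i, rfl⟩
    | zero => simpa using Submodule.zero_mem _
    | add a b _ _ ha hb => rw [map_add]; exact Submodule.add_mem _ ha hb
    | smul c a _ ha =>
        have : e (c • a) = c • e a := by
          rw [LinearIsometryEquiv.map_smulₛₗ]
          simp [starRingEnd_apply]
        rw [this]; exact Submodule.smul_mem _ c ha
  -- the key: dual distance equals norm of the orthogonal part
  have key : ∀ f : StrongDual ℝ H,
      infDist f S = ‖e.symm f - (K.orthogonalProjectionOnto (e.symm f) : H)‖ := by
    intro f
    set u : H := e.symm f with hu
    set w : H := u - (K.orthogonalProjectionOnto u : H) with hw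
    have hSne : S.Nonempty := ⟨0, by simpa [hS] using (Submodule.span ℝ (Set.range lam)).zero_mem⟩
    apply le_antisymm
    · have h1 : e ((K.orthogonalProjectionOnto u : H)) ∈ S :=
        hmem₂ _ (Submodule.coe_mem _)
      calc infDist f S ≤ dist f (e ((K.orthogonalProjectionOnto u : H))) :=
            infDist_le_dist_of_mem h1
        _ = dist (e.symm f) (e.symm (e ((K.orthogonalProjectionOnto u : H)))) :=
            (e.symm.dist_map _ _).symm
        _ = ‖w‖ := by rw [e.symm_apply_apply, ← hu, hw, dist_eq_norm]
    · refine le_of_not_gt fun hlt => ?_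
      obtain ⟨g, hgS, hglt⟩ := (infDist_lt_iff hSne).1 hlt
      have hv : e.symm g ∈ K := hmem₁ g hgS
      have hdist : dist f g = ‖u - e.symm g‖ := by
        rw [← e.symm.dist_map, dist_eq_norm]
      have hworth : w ∈ Kᗮ := Submodule.sub_starProjection_mem_orthogonal (K := K) u
      have horth : ⟪w, (K.orthogonalProjectionOnto u : H) - e.symm g⟫ = 0 := by
        have hmem : (K.orthogonalProjectionOnto u : H) - e.symm g ∈ K :=
          K.sub_mem (Submodule.coe_mem _) hv
        have := (Submodule.mem_orthogonal K w).1 hworth _ hmem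
        rwa [real_inner_comm] at this
      have hpyth : ‖u - e.symm g‖ ^ 2 =
          ‖w‖ ^ 2 + ‖(K.orthogonalProjectionOnto u : H) - e.symm g‖ ^ 2 := by
        have hsplit : u - e.symm g = w + ((K.orthogonalProjectionOnto u : H) - e.symm g) := by
          rw [hw]; abel
        rw [hsplit, norm_add_sq_real, horth]; ring
      rw [hdist] at hglt
      nlinarith [norm_nonneg (u - e.symm g), norm_nonneg w,
        norm_nonneg ((K.orthogonalProjectionOnto u : H) - e.symm g), hpyth, hglt]
  -- f applied to a vector orthogonal to K equals inner with the orthogonal part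
  have keyval : ∀ f : StrongDual ℝ H, ∀ v ∈ Kᗮ,
      f v = ⟪e.symm f - (K.orthogonalProjectionOnto (e.symm f) : H), v⟫ := by
    intro f v hv
    have h1 : f v = ⟪e.symm f, v⟫ := (InnerProductSpace.toDual_symm_apply).symm
    have h2 : ⟪(K.orthogonalProjectionOnto (e.symm f) : H), v⟫ = 0 :=
      (Submodule.mem_orthogonal K v).1 hv _ (Submodule.coe_mem _)
    rw [inner_sub_left, h2, sub_zero, h1]
  rcases isEmpty_or_nonempty ↥M with hM | hM
  · rw [Real.iSup_of_isEmpty]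
    exact mul_nonneg hC.le (Real.iSup_nonneg fun _ => infDist_nonneg)
  -- bound on M from compactness
  obtain ⟨R, hR⟩ : ∃ R, ∀ μ ∈ M, ‖μ‖ ≤ R := hMcpt.isBounded.exists_norm_le
  have hμle : ∀ (μ : StrongDual ℝ H), μ ∈ M → ∀ v : H, |μ v| ≤ pWP v := by
    intro μ hμ v
    rw [hWPeq]
    have hbdd : BddAbove (Set.range fun μ' : M => |(μ' : StrongDual ℝ H) v|) := by
      refine ⟨R * ‖v‖, ?_⟩
      rintro r ⟨μ', rfl⟩
      calc |(μ' : StrongDual ℝ H) v| ≤ ‖(μ' : StrongDual ℝ H)‖ * ‖v‖ :=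
            (μ' : StrongDual ℝ H).le_opNorm v |>.trans_eq' (by rw [Real.norm_eq_abs])
        _ ≤ R * ‖v‖ := mul_le_mul_of_nonneg_right (hR _ μ'.2) (norm_nonneg v)
    exact le_ciSup hbdd ⟨μ, hμ⟩
  have hvanish : ∀ (μ : StrongDual ℝ H), μ ∈ M → ∀ v : H,
      ¬BddAbove (Set.range fun l : Λ => |(l : StrongDual ℝ H) v|) → μ v = 0 := by
    intro μ hμ v hnb
    have h0 : pWP v ≤ 0 := by
      have := hWP v
      rwa [Real.iSup_of_not_bddAbove hnb, mul_zero] at this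
    have := (hμle μ hμ v).trans h0
    exact abs_nonpos_iff.mp this
  refine ciSup_le fun μ => ?_
  set u : H := e.symm (μ : StrongDual ℝ H) with hu
  set w : H := u - (K.orthogonalProjectionOnto u : H) with hw
  have hworth : w ∈ Kᗮ := Submodule.sub_starProjection_mem_orthogonal (K := K) u
  have hkey : infDist (μ : StrongDual ℝ H) S = ‖w‖ := key _
  have hμw : (μ : StrongDual ℝ H) w = ‖w‖ ^ 2 := by
    rw [keyval _ w hworth, ← hu, ← hw, real_inner_self_eq_norm_sq]
  by_cases hbb : BddAbove (Set.range fun l : Λ => infDist (l : StrongDual ℝ H) S)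
  · -- bounded case: the standard estimate
    set σ : ℝ := ⨆ l : Λ, infDist (l : StrongDual ℝ H) S with hσ
    have hσ0 : 0 ≤ σ := Real.iSup_nonneg fun _ => infDist_nonneg
    have hsup : (⨆ l : Λ, |(l : StrongDual ℝ H) w|) ≤ σ * ‖w‖ := by
      rcases isEmpty_or_nonempty ↥Λ with hΛ | hΛ
      · rw [Real.iSup_of_isEmpty]; positivity
      · refine ciSup_le fun l => ?_
        calc |(l : StrongDual ℝ H) w|
            = |⟪e.symm (l : StrongDual ℝ H) -
                (K.orthogonalProjectionOnto (e.symm (l : StrongDual ℝ H)) : H), w⟫| := by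
              rw [keyval _ w hworth]
          _ ≤ ‖e.symm (l : StrongDual ℝ H) -
                (K.orthogonalProjectionOnto (e.symm (l : StrongDual ℝ H)) : H)‖ * ‖w‖ :=
              abs_real_inner_le_norm _ _
          _ = infDist (l : StrongDual ℝ H) S * ‖w‖ := by rw [key]
          _ ≤ σ * ‖w‖ := mul_le_mul_of_nonneg_right (le_ciSup hbb l) (norm_nonneg w)
    have h1 : ‖w‖ ^ 2 ≤ C * (σ * ‖w‖) := by
      calc ‖w‖ ^ 2 = (μ : StrongDual ℝ H) w := hμw.symm
        _ ≤ |(μ : StrongDual ℝ H) w| := le_abs_self _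
        _ ≤ pWP w := hμle _ μ.2 w
        _ ≤ C * ⨆ l : Λ, |(l : StrongDual ℝ H) w| := hWP w
        _ ≤ C * (σ * ‖w‖) := mul_le_mul_of_nonneg_left hsup hC.le
    rw [hkey]
    rcases eq_or_lt_of_le (norm_nonneg w) with h0 | h0
    · rw [← h0]; positivity
    · have h2 : ‖w‖ * ‖w‖ ≤ (C * σ) * ‖w‖ := by nlinarith
      exact le_of_mul_le_mul_right h2 h0
  · -- unbounded case: Banach–Steinhaus shows `μ` vanishes on `Kᗮ`
    rw [Real.iSup_of_not_bddAbove hbb, mul_zero, hkey]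
    haveI : CompleteSpace ↥Kᗮ := K.isClosed_orthogonal.completeSpace_coe
    set g : ↥Λ → (↥Kᗮ →L[ℝ] ℝ) := fun l => (l : StrongDual ℝ H).comp (Kᗮ.subtypeL) with hg
    have hgval : ∀ (l : ↥Λ) (v : ↥Kᗮ), g l v = (l : StrongDual ℝ H) (v : H) := fun _ _ => rfl
    have hnorm_ge : ∀ l : ↥Λ, infDist (l : StrongDual ℝ H) S ≤ ‖g l‖ := by
      intro l
      set yl : H := e.symm (l : StrongDual ℝ H) -
        (K.orthogonalProjectionOnto (e.symm (l : StrongDual ℝ H)) : H) with hyl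
      have hy : yl ∈ Kᗮ := Submodule.sub_starProjection_mem_orthogonal (K := K) _
      have hval : g l ⟨yl, hy⟩ = ‖yl‖ ^ 2 := by
        rw [hgval, keyval _ yl hy]
        exact real_inner_self_eq_norm_sq yl
      have hop : |g l ⟨yl, hy⟩| ≤ ‖g l‖ * ‖yl‖ := by
        have := (g l).le_opNorm ⟨yl, hy⟩
        simpa [Real.norm_eq_abs] using this
      rw [key]
      rcases eq_or_lt_of_le (norm_nonneg yl) with h0 | h0
      · rw [← hyl, ← h0]; exact norm_nonneg (g l)
      · rw [hval] at hop
        have : ‖yl‖ * ‖yl‖ ≤ ‖g l‖ * ‖yl‖ := by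
          calc ‖yl‖ * ‖yl‖ = |‖yl‖ ^ 2| := by
                rw [abs_of_nonneg (by positivity)]; ring
            _ ≤ ‖g l‖ * ‖yl‖ := hop
        exact le_of_mul_le_mul_right this h0
    -- the set where the family is pointwise unbounded is dense in `Kᗮ`
    have hD : Dense {v : ↥Kᗮ | ¬BddAbove (Set.range fun l : ↥Λ => |g l v|)} := by
      by_contra hd
      rw [dense_iff_closure_eq, ← ne_eq, Ne, Set.eq_univ_iff_forall] at hd
      push_neg at hd
      obtain ⟨v₀, hv₀⟩ := hd
      rw [Metric.mem_closure_iff] at hv₀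
      push_neg at hv₀
      obtain ⟨ε, hε, hball⟩ := hv₀
      have hballB : ∀ v : ↥Kᗮ, dist v₀ v < ε →
          BddAbove (Set.range fun l : ↥Λ => |g l v|) := by
        intro v hvd
        by_contra hnb
        exact absurd (hball v hnb) (not_le.mpr hvd)
      have hpb : ∀ v : ↥Kᗮ, ∃ Cb, ∀ l : ↥Λ, ‖g l v‖ ≤ Cb := by
        intro v
        by_cases hv : v = 0
        · exact ⟨0, fun l => by simp [hv]⟩
        · have hvn : (0 : ℝ) < ‖v‖ := norm_pos_iff.mpr hv
          set t : ℝ := ε / (2 * ‖v‖) with ht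
          have htpos : 0 < t := by positivity
          have h1 : dist v₀ (v₀ + t • v) < ε := by
            rw [dist_eq_norm]
            have : v₀ - (v₀ + t • v) = -(t • v) := by abel
            rw [this, norm_neg, norm_smul, Real.norm_eq_abs, abs_of_pos htpos, ht]
            rw [div_mul_eq_mul_div]
            rw [div_lt_iff₀ (by positivity)]
            nlinarith
          obtain ⟨B₀, hB₀⟩ := hballB v₀ (by simpa using hε)
          obtain ⟨B₁, hB₁⟩ := hballB _ h1
          refine ⟨(B₁ + B₀) / t, fun l => ?_⟩
          have hsplit : g l v = (g l (v₀ + t • v) - g l v₀) / t := by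
            rw [map_add, map_smul]
            field_simp
            rw [smul_eq_mul]; ring
          have hb0 : |g l v₀| ≤ B₀ := hB₀ ⟨l, rfl⟩
          have hb1 : |g l (v₀ + t • v)| ≤ B₁ := hB₁ ⟨l, rfl⟩
          rw [Real.norm_eq_abs, hsplit, abs_div, abs_of_pos htpos]
          have hnum : |g l (v₀ + t • v) - g l v₀| ≤ B₁ + B₀ :=
            (abs_sub _ _).trans (add_le_add hb1 hb0)
          exact div_le_div_of_nonneg_right hnum htpos.le
      obtain ⟨C', hC'⟩ := banach_steinhaus hpb
      refine hbb ⟨C', ?_⟩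
      rintro r ⟨l, rfl⟩
      exact (hnorm_ge l).trans (hC' l)
    -- `μ` pairs to zero with every element of the dense set
    have hzero : ∀ v ∈ {v : ↥Kᗮ | ¬BddAbove (Set.range fun l : ↥Λ => |g l v|)},
        ⟪w, (v : H)⟫ = 0 := by
      intro v hv
      have hnb : ¬BddAbove (Set.range fun l : Λ => |(l : StrongDual ℝ H) (v : H)|) := hv
      have hμv : (μ : StrongDual ℝ H) (v : H) = 0 := hvanish _ μ.2 _ hnb
      have := keyval (μ : StrongDual ℝ H) (v : H) v.2
      rw [hμv, ← hu, ← hw] at this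
      exact this.symm
    have hcont : Continuous fun v : ↥Kᗮ => ⟪w, (v : H)⟫ :=
      continuous_const.inner continuous_subtype_val
    have heq : (fun v : ↥Kᗮ => ⟪w, (v : H)⟫) = fun _ => (0 : ℝ) :=
      hcont.ext_on hD continuous_const hzero
    have hwzero : ⟪w, w⟫ = 0 := congrFun heq ⟨w, hworth⟩
    have : ‖w‖ = 0 := by
      have := real_inner_self_eq_norm_sq w
      nlinarith [norm_nonneg w]
    exact this.le
end
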